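/- For any two anonymized histograms h1 and h2, the minimum of Σ_{x∈ℕ} |D1(x) − D2(x)| over all finitely supported labeled datasets D1, D2 : ℕ → ℕ whose multisets of nonzero values equal h1 and h2 respectively, equals the sorted ℓ1 distance Σ_{i≥1} |n_(i)(h1) − n_(i)(h2)|. -/

import Mathlib

/-- The `i`-th largest element (0-indexed) of a finite multiset of naturals,
taken to be `0` when `i` exceeds the number of elements. -/
def nthLargest (h : Multiset ℕ) (i : ℕ) : ℕ :=
  ((h.sort (· ≤ ·)).reverse).getD i 0

/-- The sorted ℓ1 distance `Σ_{i≥1} |n_(i)(h1) − n_(i)(h2)|` between two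
anonymized histograms.  All terms with `i ≥ h1.card + h2.card` vanish, so the
finite sum below equals the infinite sum. -/
def sortedL1 (h1 h2 : Multiset ℕ) : ℕ :=
  ∑ i ∈ Finset.range (h1.card + h2.card),
    ((nthLargest h1 i : ℤ) - (nthLargest h2 i : ℤ)).natAbs

/-- The anonymized histogram of a finitely supported labeled dataset
`D : ℕ → ℕ`: the multiset of its nonzero values. -/
def histOf (D : ℕ →₀ ℕ) : Multiset ℕ :=
  D.support.val.map ⇑D

/-- The ℓ1 distance `Σ_{x∈ℕ} |D1(x) − D2(x)|` between two labeled datasets. -/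
def datasetDist (D1 D2 : ℕ →₀ ℕ) : ℕ :=
  ∑ x ∈ D1.support ∪ D2.support, ((D1 x : ℤ) - (D2 x : ℤ)).natAbs

/-! ### Auxiliary lemmas -/

lemma layer' (a b N : ℕ) :
    ∑ t ∈ Finset.range N, ((if t < a then (1:ℤ) else 0) - (if t < b then 1 else 0)).natAbs
      = ((min a N : ℤ) - (min b N : ℤ)).natAbs := by
  induction N with
  | zero => simp
  | succ n ih =>
    rw [Finset.sum_range_succ, ih]
    split_ifs <;> simp <;> omega

lemma layer (a b N : ℕ) (ha : a ≤ N) (hb : b ≤ N) :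
    ((a:ℤ) - b).natAbs
      = ∑ t ∈ Finset.range N,
          ((if t < a then (1:ℤ) else 0) - (if t < b then 1 else 0)).natAbs := by
  rw [layer']
  omega

lemma getD_lt_iff {t : ℕ} (l : List ℕ) (hs : l.Pairwise (· ≥ ·)) (i : ℕ) :
    t < l.getD i 0 ↔ i < l.countP (fun a => t < a) := by
  induction l generalizing i with
  | nil => simp
  | cons a l ih =>
    rw [List.pairwise_cons] at hs
    obtain ⟨ha, hl⟩ := hs
    have hzero : ¬ t < a → l.countP (fun x => t < x) = 0 := by
      intro hta
      rw [List.countP_eq_zero]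
      intro x hx
      simp only [decide_eq_true_eq]
      have := ha x hx
      omega
    match i with
    | 0 =>
      simp only [List.getD_cons_zero, List.countP_cons]
      by_cases hta : t < a
      · simp [hta]
      · simp [hta, hzero hta]
    | (i+1) =>
      simp only [List.getD_cons_succ, List.countP_cons]
      rw [ih hl]
      by_cases hta : t < a
      · simp [hta]
      · have h0 := hzero hta
        simp [hta, h0]

lemma descList_pairwise (h : Multiset ℕ) :
    ((h.sort (· ≤ ·)).reverse).Pairwise (· ≥ ·) := by
  rw [List.pairwise_reverse]
  exact Multiset.pairwise_sort h (· ≤ ·)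

lemma countP_descList (h : Multiset ℕ) (t : ℕ) :
    ((h.sort (· ≤ ·)).reverse).countP (fun a => t < a)
      = Multiset.countP (fun a => t < a) h := by
  rw [List.countP_reverse]
  conv_rhs => rw [← Multiset.sort_eq h (· ≤ ·)]
  rw [Multiset.coe_countP]

lemma lt_nthLargest_iff (h : Multiset ℕ) (t i : ℕ) :
    t < nthLargest h i ↔ i < Multiset.countP (fun a => t < a) h := by
  unfold nthLargest
  rw [getD_lt_iff _ (descList_pairwise h), countP_descList]

lemma descLen (h : Multiset ℕ) :
    ((h.sort (· ≤ ·)).reverse).length = Multiset.card h := by simp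

lemma nthLargest_le_sum (h : Multiset ℕ) (i : ℕ) : nthLargest h i ≤ h.sum := by
  unfold nthLargest
  rcases lt_or_ge i ((h.sort (· ≤ ·)).reverse).length with hi | hi
  · rw [List.getD_eq_getElem _ _ hi]
    have hm : ((h.sort (· ≤ ·)).reverse)[i] ∈ h := by
      have := List.getElem_mem hi
      rw [List.mem_reverse] at this
      exact (Multiset.mem_sort _).mp this
    exact Multiset.single_le_sum (fun x _ => Nat.zero_le x) _ hm
  · rw [List.getD_eq_default _ _ hi]
    exact Nat.zero_le _

lemma nthLargest_eq_zero (h : Multiset ℕ) (i : ℕ) (hi : Multiset.card h ≤ i) :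
    nthLargest h i = 0 := by
  unfold nthLargest
  apply List.getD_eq_default
  rw [descLen]; exact hi

lemma nthLargest_pos (h : Multiset ℕ) (hp : ∀ a ∈ h, 0 < a) (i : ℕ)
    (hi : i < Multiset.card h) : 0 < nthLargest h i := by
  unfold nthLargest
  rw [← descLen h] at hi
  rw [List.getD_eq_getElem _ _ hi]
  apply hp
  have := List.getElem_mem hi
  rw [List.mem_reverse] at this
  exact (Multiset.mem_sort _).mp this

lemma natAbs_sum_le' (s : Finset ℕ) (f : ℕ → ℤ) :
    (∑ i ∈ s, f i).natAbs ≤ ∑ i ∈ s, (f i).natAbs := by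
  classical
  induction s using Finset.induction with
  | empty => simp
  | insert _ _ h ih =>
    rw [Finset.sum_insert h, Finset.sum_insert h]
    calc _ ≤ _ := Int.natAbs_add_le _ _
    _ ≤ _ := by omega

lemma sum_indicator_eq_countP (D : ℕ →₀ ℕ) (S : Finset ℕ) (hS : D.support ⊆ S) (t : ℕ) :
    ∑ x ∈ S, (if t < D x then (1:ℤ) else 0) = Multiset.countP (fun a => t < a) (histOf D) := by
  rw [Finset.sum_boole]
  unfold histOf
  rw [Multiset.countP_map]
  have hfil : S.filter (fun x => t < D x) = D.support.filter (fun x => t < D x) := by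
    ext x
    simp only [Finset.mem_filter, Finsupp.mem_support_iff]
    constructor
    · rintro ⟨_, hx⟩; exact ⟨by omega, hx⟩
    · rintro ⟨hx, hx'⟩; exact ⟨hS (Finsupp.mem_support_iff.mpr hx), hx'⟩
  rw [hfil]
  rfl

lemma apply_le_sum_histOf (D : ℕ →₀ ℕ) (x : ℕ) : D x ≤ (histOf D).sum := by
  by_cases hx : x ∈ D.support
  · have : D x ∈ histOf D := Multiset.mem_map_of_mem _ hx
    exact Multiset.single_le_sum (fun a _ => Nat.zero_le a) _ this
  · rw [Finsupp.notMem_support_iff.mp hx]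
    exact Nat.zero_le _

/-- The canonical sorted dataset realizing a histogram. -/
def descFinsupp (h : Multiset ℕ) (hp : ∀ a ∈ h, 0 < a) : ℕ →₀ ℕ where
  support := Finset.range (Multiset.card h)
  toFun := fun i => nthLargest h i
  mem_support_toFun := by
    intro i
    simp only [Finset.mem_range]
    constructor
    · intro hi
      exact (nthLargest_pos h hp i hi).ne'
    · intro hne
      by_contra hi
      exact hne (nthLargest_eq_zero h i (by omega))

lemma histOf_descFinsupp (h : Multiset ℕ) (hp : ∀ a ∈ h, 0 < a) :
    histOf (descFinsupp h hp) = h := by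
  unfold histOf descFinsupp
  simp only [Finsupp.coe_mk]
  have h1 : (Finset.range (Multiset.card h)).val = ↑(List.range (Multiset.card h)) := rfl
  rw [h1]
  rw [show ((↑(List.range (Multiset.card h)) : Multiset ℕ).map fun i => nthLargest h i)
      = ↑((List.range (Multiset.card h)).map fun i => nthLargest h i) from rfl]
  have hl : (List.range (Multiset.card h)).map (fun i => nthLargest h i)
      = (h.sort (· ≤ ·)).reverse := by
    apply List.ext_getElem
    · simp
    · intro i hi1 hi2
      simp only [List.getElem_map, List.getElem_range]
      unfold nthLargest
      rw [List.getD_eq_getElem _ _ hi2]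
  rw [hl, Multiset.coe_reverse]
  exact Multiset.sort_eq _ _

/-- The minimum of `Σ_x |D1(x) − D2(x)|` over labeled datasets `D1, D2` whose
anonymized histograms are `h1` and `h2` equals the sorted ℓ1 distance. -/
theorem min_dataset_dist_eq_sortedL1 (h1 h2 : Multiset ℕ)
    (hp1 : ∀ a ∈ h1, 0 < a) (hp2 : ∀ a ∈ h2, 0 < a) :
    IsLeast {d : ℕ | ∃ D1 D2 : ℕ →₀ ℕ,
        histOf D1 = h1 ∧ histOf D2 = h2 ∧ d = datasetDist D1 D2}
      (sortedL1 h1 h2) := by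
  classical
  constructor
  · -- membership: the sorted datasets achieve the sorted ℓ1 distance
    refine ⟨descFinsupp h1 hp1, descFinsupp h2 hp2,
      histOf_descFinsupp h1 hp1, histOf_descFinsupp h2 hp2, ?_⟩
    unfold datasetDist sortedL1
    have hD1 : ∀ x, (descFinsupp h1 hp1) x = nthLargest h1 x := fun _ => rfl
    have hD2 : ∀ x, (descFinsupp h2 hp2) x = nthLargest h2 x := fun _ => rfl
    have hsupp : (descFinsupp h1 hp1).support ∪ (descFinsupp h2 hp2).support
        ⊆ Finset.range (Multiset.card h1 + Multiset.card h2) := by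
      intro x hx
      simp only [descFinsupp, Finset.mem_union, Finset.mem_range] at hx ⊢
      omega
    rw [Finset.sum_subset hsupp]
    · exact Finset.sum_congr rfl (fun x _ => by rw [hD1, hD2])
    · intro x _ hx
      simp only [descFinsupp, Finset.mem_union, Finset.mem_range, not_or, not_lt] at hx
      rw [hD1, hD2, nthLargest_eq_zero h1 x hx.1, nthLargest_eq_zero h2 x hx.2]
      simp
  · -- lower bound
    rintro d ⟨D1, D2, e1, e2, rfl⟩
    set N := h1.sum + h2.sum + 1 with hN
    set K := Multiset.card h1 + Multiset.card h2 with hK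
    set S := D1.support ∪ D2.support with hS
    have hb1 : ∀ x, D1 x ≤ h1.sum := fun x => by
      have := apply_le_sum_histOf D1 x; rwa [e1] at this
    have hb2 : ∀ x, D2 x ≤ h2.sum := fun x => by
      have := apply_le_sum_histOf D2 x; rwa [e2] at this
    have key : ∀ t : ℕ,
        ((Multiset.countP (fun a => t < a) h1 : ℤ)
          - (Multiset.countP (fun a => t < a) h2 : ℤ)).natAbs
        ≤ ∑ x ∈ S, ((if t < D1 x then (1:ℤ) else 0) - (if t < D2 x then 1 else 0)).natAbs := by
      intro t
      have hsum : ∑ x ∈ S, ((if t < D1 x then (1:ℤ) else 0) - (if t < D2 x then 1 else 0))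
          = (Multiset.countP (fun a => t < a) h1 : ℤ)
            - (Multiset.countP (fun a => t < a) h2 : ℤ) := by
        rw [Finset.sum_sub_distrib,
          sum_indicator_eq_countP D1 S Finset.subset_union_left t,
          sum_indicator_eq_countP D2 S Finset.subset_union_right t, e1, e2]
      calc _ = (∑ x ∈ S, ((if t < D1 x then (1:ℤ) else 0)
                - (if t < D2 x then 1 else 0))).natAbs := by rw [hsum]
        _ ≤ _ := natAbs_sum_le' _ _
    have lhs_eq : sortedL1 h1 h2
        = ∑ t ∈ Finset.range N,
            ((Multiset.countP (fun a => t < a) h1 : ℤ)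
              - (Multiset.countP (fun a => t < a) h2 : ℤ)).natAbs := by
      unfold sortedL1
      have step1 : ∀ i ∈ Finset.range K,
          ((nthLargest h1 i : ℤ) - (nthLargest h2 i : ℤ)).natAbs
          = ∑ t ∈ Finset.range N,
              ((if t < nthLargest h1 i then (1:ℤ) else 0)
                - (if t < nthLargest h2 i then 1 else 0)).natAbs := by
        intro i _
        exact layer _ _ N (by have := nthLargest_le_sum h1 i; omega)
          (by have := nthLargest_le_sum h2 i; omega)
      rw [Finset.sum_congr rfl step1, Finset.sum_comm]
      refine Finset.sum_congr rfl (fun t _ => ?_)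
      have hiff1 : ∀ i : ℕ, (t < nthLargest h1 i) ↔ (i < Multiset.countP (fun a => t < a) h1) :=
        fun i => lt_nthLargest_iff h1 t i
      have hiff2 : ∀ i : ℕ, (t < nthLargest h2 i) ↔ (i < Multiset.countP (fun a => t < a) h2) :=
        fun i => lt_nthLargest_iff h2 t i
      have : ∑ i ∈ Finset.range K,
          ((if t < nthLargest h1 i then (1:ℤ) else 0)
            - (if t < nthLargest h2 i then 1 else 0)).natAbs
          = ∑ i ∈ Finset.range K,
          ((if i < Multiset.countP (fun a => t < a) h1 then (1:ℤ) else 0)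
            - (if i < Multiset.countP (fun a => t < a) h2 then 1 else 0)).natAbs := by
        refine Finset.sum_congr rfl (fun i _ => ?_)
        rw [if_congr (hiff1 i) rfl rfl, if_congr (hiff2 i) rfl rfl]
      rw [this, layer', min_eq_left, min_eq_left]
      · have := Multiset.countP_le_card (fun a => t < a) h2; omega
      · have := Multiset.countP_le_card (fun a => t < a) h1; omega
    rw [lhs_eq]
    have rhs_eq : datasetDist D1 D2
        = ∑ t ∈ Finset.range N,
            ∑ x ∈ S,
              ((if t < D1 x then (1:ℤ) else 0) - (if t < D2 x then 1 else 0)).natAbs := by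
      unfold datasetDist
      rw [← hS, ← Finset.sum_comm]
      refine Finset.sum_congr rfl (fun x _ => ?_)
      exact layer _ _ N (by have := hb1 x; omega) (by have := hb2 x; omega)
    rw [rhs_eq]
    exact Finset.sum_le_sum (fun t _ => key t)
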